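/- Let μ₀ > 0, let k ≥ 1 be an integer, and let λ₁, …, λ_k be pairwise distinct real numbers in the open interval (0, 2π/μ₀). For x = (x₀, x₁, x₂, x₃) ∈ ℝ⁴, the 2k × 2k complex matrix I − Hol(x) is singular (equivalently det(I − Hol(x)) = 0) if and only if x₁ = x₂ = x₃ = 0 and x₀ = λ_ℓ + 2πm/μ₀ for some ℓ ∈ {1, …, k} and some m ∈ ℤ (that is, if and only if x is a resonating point). -/

import Mathlib

open Matrix Complex Kronecker

noncomputable section

/-- The spin matrices `γ₀, γ₁, γ₂, γ₃`. -/
def γ0 : Matrix (Fin 2) (Fin 2) ℂ := !![1, 0; 0, 1]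
def γ1 : Matrix (Fin 2) (Fin 2) ℂ := !![I, 0; 0, -I]
def γ2 : Matrix (Fin 2) (Fin 2) ℂ := !![0, -1; 1, 0]
def γ3 : Matrix (Fin 2) (Fin 2) ℂ := !![0, I; I, 0]

/-- `X(x) = x₀γ₀ + x₁γ₁ + x₂γ₂ + x₃γ₃`. -/
def Xmat (x₀ x₁ x₂ x₃ : ℝ) : Matrix (Fin 2) (Fin 2) ℂ :=
  (x₀ : ℂ) • γ0 + (x₁ : ℂ) • γ1 + (x₂ : ℂ) • γ2 + (x₃ : ℂ) • γ3

/-- The holonomy `Hol(x) = exp( μ₀ ( i X(x) ⊗ I_k − I₂ ⊗ Λ ) )` of the instanton-block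
Nahm operator, where `Λ = diag(iλ₁,…,iλ_k)`. -/
def Hol (μ₀ : ℝ) (k : ℕ) (lam : Fin k → ℝ) (x₀ x₁ x₂ x₃ : ℝ) :
    Matrix (Fin 2 × Fin k) (Fin 2 × Fin k) ℂ :=
  NormedSpace.exp
    ((μ₀ : ℂ) • (I • (Xmat x₀ x₁ x₂ x₃ ⊗ₖ (1 : Matrix (Fin k) (Fin k) ℂ)) -
      (1 : Matrix (Fin 2) (Fin 2) ℂ) ⊗ₖ Matrix.diagonal (fun ℓ => I * (lam ℓ : ℂ))))

section
attribute [local instance] Matrix.linftyOpNormedAddCommGroup Matrix.linftyOpNormedRing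
  Matrix.linftyOpNormedAlgebra

lemma exp_pi_apply {k : ℕ} (v : Fin k → Matrix (Fin 2) (Fin 2) ℂ) (ℓ : Fin k) :
    NormedSpace.exp v ℓ = NormedSpace.exp (v ℓ) :=
  haveI : CompleteSpace (Matrix (Fin 2) (Fin 2) ℂ) := FiniteDimensional.complete ℂ _
  @Pi.coe_exp (Fin k) (fun _ => Matrix (Fin 2) (Fin 2) ℂ) _ _ _ (fun _ => this) v ℓ
end

lemma Xmat_eq (x₀ x₁ x₂ x₃ : ℝ) : Xmat x₀ x₁ x₂ x₃ =
    !![(x₀:ℂ) + I*x₁, -(x₂:ℂ) + I*x₃; (x₂:ℂ) + I*x₃, (x₀:ℂ) - I*x₁] := by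
  ext i j
  fin_cases i <;> fin_cases j <;> simp [Xmat, γ0, γ1, γ2, γ3] <;> ring

lemma det_one_sub_exp_diag (a b : ℂ) :
    ((1 : Matrix (Fin 2) (Fin 2) ℂ) - NormedSpace.exp (Matrix.diagonal ![a, b])).det
      = (1 - Complex.exp a) * (1 - Complex.exp b) := by
  rw [Matrix.exp_diagonal]
  simp [Matrix.det_fin_two, Matrix.one_apply, Matrix.diagonal_apply, Pi.coe_exp,
    ← Complex.exp_eq_exp_ℂ]

lemma key_scalar (t s : ℝ) :
    (1 - Complex.exp (I * t + s)) * (1 - Complex.exp (I * t - s)) = 0 ↔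
      s = 0 ∧ ∃ n : ℤ, t = 2 * Real.pi * n := by
  rw [mul_eq_zero, sub_eq_zero, sub_eq_zero, eq_comm (b := exp _), eq_comm (b := exp _),
    Complex.exp_eq_one_iff, Complex.exp_eq_one_iff]
  constructor
  · rintro (⟨n, hn⟩ | ⟨n, hn⟩) <;>
    · simp [Complex.ext_iff] at hn
      refine ⟨by linarith [hn.1], n, by linarith [hn.2]⟩
  · rintro ⟨hs, n, ht⟩
    exact Or.inl ⟨n, by simp [Complex.ext_iff, hs, ht]; ring⟩

lemma block_det (μ₀ x₀ x₁ x₂ x₃ lamℓ : ℝ) :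
    ∃ s : ℝ, (s = 0 ↔ x₁ = 0 ∧ x₂ = 0 ∧ x₃ = 0) ∧
      ((1 : Matrix (Fin 2) (Fin 2) ℂ) -
          NormedSpace.exp (((μ₀:ℂ) * I) •
            (Xmat x₀ x₁ x₂ x₃ - (lamℓ:ℂ) • 1))).det =
        (1 - Complex.exp (I * ((μ₀*(x₀-lamℓ) : ℝ) : ℂ) + ((μ₀*s : ℝ) : ℂ))) *
        (1 - Complex.exp (I * ((μ₀*(x₀-lamℓ) : ℝ) : ℂ) - ((μ₀*s : ℝ) : ℂ))) := by
  by_cases h23 : x₂ = 0 ∧ x₃ = 0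
  · obtain ⟨h2, h3⟩ := h23
    refine ⟨x₁, by simp [h2, h3], ?_⟩
    have hB : ((μ₀:ℂ) * I) • (Xmat x₀ x₁ x₂ x₃ - (lamℓ:ℂ) • 1) =
        Matrix.diagonal ![I * ((μ₀*(x₀-lamℓ) : ℝ) : ℂ) - ((μ₀*x₁ : ℝ) : ℂ),
          I * ((μ₀*(x₀-lamℓ) : ℝ) : ℂ) + ((μ₀*x₁ : ℝ) : ℂ)] := by
      ext i j
      fin_cases i <;> fin_cases j <;>
        (simp [Xmat_eq, h2, h3, Matrix.one_apply, Complex.ext_iff]) <;>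
        constructor <;> first | ring | linarith
    rw [hB, det_one_sub_exp_diag]
    ring
  · set r : ℝ := Real.sqrt (x₁^2 + x₂^2 + x₃^2) with hrdef
    have hsumpos : 0 < x₁^2 + x₂^2 + x₃^2 := by
      rcases not_and_or.1 h23 with h | h <;> positivity
    have hr2 : r^2 = x₁^2 + x₂^2 + x₃^2 := Real.sq_sqrt (by positivity)
    have hrpos : 0 < r := Real.sqrt_pos.2 hsumpos
    have h23pos : 0 < x₂^2 + x₃^2 := by
      rcases not_and_or.1 h23 with h | h <;> positivity
    have hx1r : 0 < x₁ + r := by nlinarith [hr2, h23pos, hrpos, sq_nonneg (x₁ + r)]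
    have hiff : r = 0 ↔ x₁ = 0 ∧ x₂ = 0 ∧ x₃ = 0 :=
      ⟨fun h => absurd h hrpos.ne', fun ⟨h1, h2, h3⟩ => by simp [h1, h2, h3] at hsumpos⟩
    refine ⟨r, hiff, ?_⟩
    set c : ℂ := Complex.I * ((μ₀*(x₀-lamℓ) : ℝ) : ℂ) with hc
    set P : Matrix (Fin 2) (Fin 2) ℂ :=
      !![I*((x₁:ℂ)+r), (x₂:ℂ) - I*x₃; (x₂:ℂ) + I*x₃, I*((x₁:ℂ)+r)] with hP
    have hdetP : P.det = -2*(r:ℂ)*((r:ℂ)+x₁) := by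
      simp [hP, Matrix.det_fin_two_of, Complex.ext_iff]
      constructor <;> nlinarith [hr2]
    have hdetP0 : P.det ≠ 0 := by
      rw [hdetP]
      have h1 : (r:ℂ) ≠ 0 := Complex.ofReal_ne_zero.2 hrpos.ne'
      have h2 : ((r + x₁ : ℝ) : ℂ) ≠ 0 := Complex.ofReal_ne_zero.2 (by linarith)
      push_cast at h2
      exact mul_ne_zero (mul_ne_zero (by norm_num) h1) h2
    have hPunit : IsUnit P := (Matrix.isUnit_iff_isUnit_det P).2 (isUnit_iff_ne_zero.2 hdetP0)
    set D : Matrix (Fin 2) (Fin 2) ℂ :=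
      Matrix.diagonal ![c - ((μ₀*r : ℝ) : ℂ), c + ((μ₀*r : ℝ) : ℂ)] with hD
    have hBP : (((μ₀:ℂ) * I) • (Xmat x₀ x₁ x₂ x₃ - (lamℓ:ℂ) • 1)) * P = P * D := by
      ext i j
      fin_cases i <;> fin_cases j <;>
        (simp [Xmat_eq, hP, hD, hc, Matrix.mul_apply, Fin.sum_univ_two, Matrix.one_apply,
          Complex.ext_iff]
         constructor <;>
           first
             | linarith
             | linear_combination (μ₀ : ℝ) * hr2
             | linear_combination (-μ₀ : ℝ) * hr2
             | ring)
    have hPP : P * P⁻¹ = 1 := Matrix.mul_nonsing_inv P (isUnit_iff_ne_zero.2 hdetP0)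
    have hB : ((μ₀:ℂ) * I) • (Xmat x₀ x₁ x₂ x₃ - (lamℓ:ℂ) • 1) = P * D * P⁻¹ := by
      calc ((μ₀:ℂ) * I) • (Xmat x₀ x₁ x₂ x₃ - (lamℓ:ℂ) • 1)
          = (((μ₀:ℂ) * I) • (Xmat x₀ x₁ x₂ x₃ - (lamℓ:ℂ) • 1)) * P * P⁻¹ := by
            rw [mul_assoc, hPP, mul_one]
        _ = P * D * P⁻¹ := by rw [hBP]
    rw [hB, Matrix.exp_conj P D hPunit]
    have h1 : (1 : Matrix (Fin 2) (Fin 2) ℂ) - P * NormedSpace.exp D * P⁻¹ =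
        P * ((1 : Matrix (Fin 2) (Fin 2) ℂ) - NormedSpace.exp D) * P⁻¹ := by
      rw [Matrix.mul_sub, Matrix.sub_mul, mul_one, hPP]
    rw [h1, Matrix.det_conj hPunit, hD, det_one_sub_exp_diag, hc]
    ring

/-- `I − Hol(x)` is singular if and only if `x` is a resonating point, i.e.
`x₁ = x₂ = x₃ = 0` and `x₀ = λ_ℓ + 2πm/μ₀` for some `ℓ ∈ {1,…,k}` and `m ∈ ℤ`. -/
theorem one_sub_hol_singular_iff_resonating
    (μ₀ : ℝ) (hμ₀ : 0 < μ₀) (k : ℕ) (hk : 1 ≤ k)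
    (lam : Fin k → ℝ) (hinj : Function.Injective lam)
    (hmem : ∀ ℓ, lam ℓ ∈ Set.Ioo 0 (2 * Real.pi / μ₀))
    (x₀ x₁ x₂ x₃ : ℝ) :
    ((1 : Matrix (Fin 2 × Fin k) (Fin 2 × Fin k) ℂ) - Hol μ₀ k lam x₀ x₁ x₂ x₃).det = 0 ↔
      x₁ = 0 ∧ x₂ = 0 ∧ x₃ = 0 ∧
        ∃ ℓ : Fin k, ∃ m : ℤ, x₀ = lam ℓ + 2 * Real.pi * m / μ₀ := by
  have hA : (μ₀ : ℂ) • (I • (Xmat x₀ x₁ x₂ x₃ ⊗ₖ (1 : Matrix (Fin k) (Fin k) ℂ)) -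
      (1 : Matrix (Fin 2) (Fin 2) ℂ) ⊗ₖ Matrix.diagonal (fun ℓ => I * (lam ℓ : ℂ))) =
      Matrix.blockDiagonal (fun ℓ => ((μ₀:ℂ) * I) • (Xmat x₀ x₁ x₂ x₃ - (lam ℓ : ℂ) • 1)) := by
    ext ⟨i, a⟩ ⟨j, b⟩
    by_cases hab : a = b <;>
      simp [Matrix.blockDiagonal_apply, Matrix.kroneckerMap_apply, Matrix.one_apply,
        Matrix.diagonal_apply, hab, Prod.ext_iff] <;>
      split_ifs <;> ring
  rw [Hol, hA, Matrix.exp_blockDiagonal, ← Matrix.blockDiagonal_one,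
    ← Matrix.blockDiagonal_sub, Matrix.det_blockDiagonal, Finset.prod_eq_zero_iff]
  constructor
  · rintro ⟨ℓ, -, hdet⟩
    obtain ⟨s, hs, hval⟩ := block_det μ₀ x₀ x₁ x₂ x₃ (lam ℓ)
    simp only [Pi.sub_apply, Pi.one_apply, exp_pi_apply] at hdet
    rw [hval, key_scalar] at hdet
    obtain ⟨hs0, n, hn⟩ := hdet
    have hs' : s = 0 := by
      rcases mul_eq_zero.1 hs0 with h | h
      · exact absurd h hμ₀.ne'
      · exact h
    obtain ⟨h1, h2, h3⟩ := hs.1 hs'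
    refine ⟨h1, h2, h3, ℓ, n, ?_⟩
    field_simp
    linear_combination hn
  · rintro ⟨h1, h2, h3, ℓ, m, hx⟩
    refine ⟨ℓ, Finset.mem_univ _, ?_⟩
    obtain ⟨s, hs, hval⟩ := block_det μ₀ x₀ x₁ x₂ x₃ (lam ℓ)
    simp only [Pi.sub_apply, Pi.one_apply, exp_pi_apply]
    rw [hval, key_scalar]
    refine ⟨by rw [hs.2 ⟨h1, h2, h3⟩, mul_zero], m, ?_⟩
    rw [hx]
    field_simp
    ring

end
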